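/- Let n = 2k with k ≥ 1, and define the Boolean function f_n : {0,1}ⁿ → {0,1} by f_n(x) = 1 if and only if |x| ≥ k+1, or (|x| ≥ k and for every j ∈ {1,…,k} not both x_{2j−1} = 1 and x_{2j} = 1), where |x| = Σᵢ xᵢ. Define the real polynomial p(x) = Σ_{i=1}^{n} xᵢ − (1/k) Σ_{j=1}^{k} x_{2j−1} x_{2j} − k. Then for every x ∈ {0,1}ⁿ, f_n(x) = 1 if and only if p(x) ≥ 0. In particular, f_n is a quadratic threshold function whose representing polynomial has n + k + 1 terms, i.e., O(n) terms. -/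

import Mathlib

open Finset

/-- Evaluation of a multilinear real polynomial in `n` variables given by its coefficient
function `c` (where `c S` is the coefficient of the monomial `∏ i ∈ S, x i`). -/
noncomputable def mEval {n : ℕ} (c : Finset (Fin n) → ℝ) (x : Fin n → ℝ) : ℝ :=
  ∑ S : Finset (Fin n), c S * ∏ i ∈ S, x i

/-- The real value of a Boolean. -/
noncomputable def bval (b : Bool) : ℝ := if b then 1 else 0

/-- The weight (number of ones) of a Boolean vector. -/
def wt {n : ℕ} (x : Fin n → Bool) : ℕ := ∑ i, if x i then 1 else 0

-- The number of terms (size) of a multilinear polynomial given by its coefficients.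
open Classical in
noncomputable def nTerms {n : ℕ} (c : Finset (Fin n) → ℝ) : ℕ :=
  (Finset.univ.filter (fun S => c S ≠ 0)).card

lemma sum_range_two_mul {M : Type*} [AddCommMonoid M] (m : ℕ) (g : ℕ → M) :
    ∑ i ∈ Finset.range (2*m), g i = ∑ j ∈ Finset.range m, (g (2*j) + g (2*j+1)) := by
  induction m with
  | zero => simp
  | succ n ih =>
    have h2 : 2*(n+1) = 2*n + 1 + 1 := by ring
    rw [h2, Finset.sum_range_succ, Finset.sum_range_succ, Finset.sum_range_succ, ih]
    abel

lemma two_mul_fin_lt (k : ℕ) (j : Fin k) : 2 * (j : ℕ) < 2 * k := by omega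

lemma two_mul_add_one_fin_lt (k : ℕ) (j : Fin k) : 2 * (j : ℕ) + 1 < 2 * k := by omega

lemma part1 (k : ℕ) (hk : 1 ≤ k) (x : Fin (2*k) → Bool) :
    (k + 1 ≤ wt x ∨ (k ≤ wt x ∧
        ∀ j : Fin k, ¬(x ⟨2 * j, two_mul_fin_lt k j⟩ = true ∧ x ⟨2 * j + 1, two_mul_add_one_fin_lt k j⟩ = true))) ↔
      0 ≤ (∑ i, bval (x i))
        - (1 / (k : ℝ)) * (∑ j : Fin k, bval (x ⟨2 * j, two_mul_fin_lt k j⟩) * bval (x ⟨2 * j + 1, two_mul_add_one_fin_lt k j⟩))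
        - (k : ℝ) := by
  classical
  set m : ℕ := ∑ j : Fin k,
    (if x ⟨2 * j, by omega⟩ = true ∧ x ⟨2 * j + 1, by omega⟩ = true then 1 else 0) with hm_def
  have hW : (∑ i, bval (x i)) = (wt x : ℝ) := by
    rw [wt, Nat.cast_sum]
    exact Finset.sum_congr rfl fun i _ => by cases hxi : x i <;> simp [bval, hxi]
  have hM : (∑ j : Fin k, bval (x ⟨2 * j, by omega⟩) * bval (x ⟨2 * j + 1, by omega⟩))
      = (m : ℝ) := by
    rw [hm_def]
    push_cast
    apply Finset.sum_congr rfl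
    intro j _
    cases ha : x ⟨2 * j, by omega⟩ <;> cases hb : x ⟨2 * j + 1, by omega⟩ <;>
      simp [bval, ha, hb]
  have hmk : m ≤ k := by
    calc m ≤ ∑ _j : Fin k, 1 := Finset.sum_le_sum (fun j _ => by split <;> omega)
    _ = k := by simp
  -- wt x ≤ k + m
  set g : ℕ → ℕ := fun i => if h : i < 2*k then (if x ⟨i, h⟩ then 1 else 0) else 0 with hg_def
  have hg : wt x = ∑ i ∈ Finset.range (2*k), g i := by
    rw [wt, ← Fin.sum_univ_eq_sum_range]
    exact Finset.sum_congr rfl fun i _ => by simp [hg_def, i.isLt]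
  set M : ℕ → ℕ := fun j => if h : j < k then
      (if x ⟨2*j, by omega⟩ = true ∧ x ⟨2*j+1, by omega⟩ = true then 1 else 0) else 0 with hM_def
  have hm' : m = ∑ j ∈ Finset.range k, M j := by
    rw [hm_def, ← Fin.sum_univ_eq_sum_range]
    exact Finset.sum_congr rfl fun j _ => by simp [hM_def, j.isLt]
  have hwk : wt x ≤ k + m := by
    rw [hg, sum_range_two_mul, hm']
    have : k + ∑ j ∈ Finset.range k, M j = ∑ j ∈ Finset.range k, (1 + M j) := by
      rw [Finset.sum_add_distrib]; simp
    rw [this]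
    refine Finset.sum_le_sum fun j hj => ?_
    have hjk : j < k := Finset.mem_range.mp hj
    have h1 : 2*j < 2*k := by omega
    have h2 : 2*j+1 < 2*k := by omega
    simp only [hg_def, hM_def, dif_pos h1, dif_pos h2, dif_pos hjk]
    by_cases ha : x ⟨2*j, h1⟩ = true <;> by_cases hb : x ⟨2*j+1, h2⟩ = true <;>
      simp [ha, hb]
  have hm0 : m = 0 ↔
      ∀ j : Fin k, ¬(x ⟨2 * j, by omega⟩ = true ∧ x ⟨2 * j + 1, by omega⟩ = true) := by
    rw [hm_def, Finset.sum_eq_zero_iff]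
    simp
  have hk0 : (0:ℝ) < k := by exact_mod_cast Nat.lt_of_lt_of_le Nat.zero_lt_one hk
  rw [hW, hM]
  have key : (0 ≤ (wt x:ℝ) - (1/(k:ℝ))*(m:ℝ) - (k:ℝ)) ↔
      ((m:ℝ) ≤ (k:ℝ)*((wt x:ℝ) - (k:ℝ))) := by
    rw [show (wt x:ℝ) - (1/(k:ℝ))*(m:ℝ) - (k:ℝ)
        = ((k:ℝ)*((wt x:ℝ)-(k:ℝ)) - (m:ℝ))/(k:ℝ) by field_simp; ring]
    rw [le_div_iff₀ hk0, zero_mul, sub_nonneg]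
  rw [key]
  constructor
  · rintro (h | ⟨h1, h2⟩)
    · have h1 : (k:ℝ) + 1 ≤ (wt x:ℝ) := by exact_mod_cast h
      have h2 : (m:ℝ) ≤ (k:ℝ) := by exact_mod_cast hmk
      nlinarith
    · have hm : m = 0 := hm0.mpr h2
      rw [hm]
      have : (k:ℝ) ≤ (wt x:ℝ) := by exact_mod_cast h1
      push_cast
      nlinarith
  · intro h
    rcases Nat.lt_or_ge (wt x) k with hw | hw
    · exfalso
      have h1 : (wt x:ℝ) + 1 ≤ (k:ℝ) := by exact_mod_cast hw
      have h2 : (0:ℝ) ≤ (m:ℝ) := Nat.cast_nonneg m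
      have h3 : (1:ℝ) ≤ (k:ℝ) := by exact_mod_cast hk
      nlinarith
    · rcases eq_or_lt_of_le hw with he | hl
      · right
        refine ⟨hw, hm0.mp ?_⟩
        have : (m:ℝ) ≤ 0 := by rw [← he] at h; simpa using h
        exact_mod_cast le_antisymm (by exact_mod_cast this) (Nat.zero_le m)
      · left; omega

def pairF (k : ℕ) (j : Fin k) : Finset (Fin (2*k)) :=
  {⟨2*j, two_mul_fin_lt k j⟩, ⟨2*j+1, two_mul_add_one_fin_lt k j⟩}

lemma pairF_card (k : ℕ) (j : Fin k) : (pairF k j).card = 2 := by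
  rw [pairF, Finset.card_pair]; simp [Fin.ext_iff]

lemma pairF_inj (k : ℕ) : Function.Injective (pairF k) := by
  intro j j' h
  have : (⟨2*j, by omega⟩ : Fin (2*k)) ∈ pairF k j' := by
    rw [← h]; simp [pairF]
  simp only [pairF, Finset.mem_insert, Finset.mem_singleton, Fin.ext_iff] at this
  exact Fin.ext (by omega)

open Classical in
noncomputable def myCoef (k : ℕ) : Finset (Fin (2*k)) → ℝ := fun S =>
  if S = ∅ then -(k:ℝ)
  else if ∃ i, S = {i} then 1
  else if ∃ j : Fin k, S = pairF k j then -(1/(k:ℝ))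
  else 0

lemma myCoef_empty (k : ℕ) : myCoef k ∅ = -(k:ℝ) := by simp [myCoef]

lemma myCoef_singleton (k : ℕ) (i : Fin (2*k)) : myCoef k {i} = 1 := by
  rw [myCoef]
  rw [if_neg (Finset.singleton_ne_empty i), if_pos ⟨i, rfl⟩]

lemma myCoef_pair (k : ℕ) (j : Fin k) : myCoef k (pairF k j) = -(1/(k:ℝ)) := by
  rw [myCoef]
  rw [if_neg, if_neg, if_pos ⟨j, rfl⟩]
  · rintro ⟨i, hi⟩
    have := pairF_card k j
    rw [hi] at this; simp at this
  · intro h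
    have := pairF_card k j
    rw [h] at this; simp at this

lemma myCoef_support (k : ℕ) (hk : 1 ≤ k) (S : Finset (Fin (2*k))) :
    myCoef k S ≠ 0 ↔
      S ∈ insert (∅ : Finset (Fin (2*k)))
        ((Finset.univ.image fun i => ({i} : Finset (Fin (2*k)))) ∪
          Finset.univ.image (pairF k)) := by
  have hk0 : (k:ℝ) ≠ 0 := Nat.cast_ne_zero.mpr (by omega)
  constructor
  · intro h
    rw [myCoef] at h
    split_ifs at h with h1 h2 h3
    · subst h1; simp
    · obtain ⟨i, hi⟩ := h2; subst hi; simp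
    · obtain ⟨j, hj⟩ := h3; subst hj; simp
    · exact absurd rfl h
  · intro h
    simp only [Finset.mem_insert, Finset.mem_union, Finset.mem_image, Finset.mem_univ,
      true_and] at h
    rcases h with h | ⟨i, hi⟩ | ⟨j, hj⟩
    · subst h; rw [myCoef_empty]; simpa using hk0
    · subst hi; rw [myCoef_singleton]; norm_num
    · subst hj; rw [myCoef_pair]; simp [hk0]

lemma myCoef_card_le (k : ℕ) (T : Finset (Fin (2*k))) (h : myCoef k T ≠ 0) : T.card ≤ 2 := by
  rw [myCoef] at h
  split_ifs at h with h1 h2 h3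
  · subst h1; simp
  · obtain ⟨i, hi⟩ := h2; subst hi; simp
  · obtain ⟨j, hj⟩ := h3; rw [hj, pairF_card]
  · exact absurd rfl h


lemma myCoef_nTerms (k : ℕ) (hk : 1 ≤ k) : nTerms (myCoef k) = 2 * k + k + 1 := by
  classical
  have hfil : (Finset.univ.filter (fun S => myCoef k S ≠ 0)) =
      insert (∅ : Finset (Fin (2*k)))
        ((Finset.univ.image fun i => ({i} : Finset (Fin (2*k)))) ∪
          Finset.univ.image (pairF k)) := by
    ext S
    simp only [Finset.mem_filter, Finset.mem_univ, true_and]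
    exact myCoef_support k hk S
  rw [nTerms]
  rw [Finset.filter_congr_decidable] at *
  rw [hfil]
  have hne : (∅ : Finset (Fin (2*k))) ∉
      ((Finset.univ.image fun i => ({i} : Finset (Fin (2*k)))) ∪
          Finset.univ.image (pairF k)) := by
    simp only [Finset.mem_union, Finset.mem_image, Finset.mem_univ, true_and, not_or]
    constructor
    · rintro ⟨i, hi⟩; exact Finset.singleton_ne_empty i hi
    · rintro ⟨j, hj⟩
      have := pairF_card k j; rw [hj] at this; simp at this
  have hdisj : Disjoint (Finset.univ.image fun i => ({i} : Finset (Fin (2*k))))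
      (Finset.univ.image (pairF k)) := by
    rw [Finset.disjoint_left]
    intro S hS hS'
    simp only [Finset.mem_image, Finset.mem_univ, true_and] at hS hS'
    obtain ⟨i, hi⟩ := hS; obtain ⟨j, hj⟩ := hS'
    have := pairF_card k j
    rw [hj, ← hi] at this; simp at this
  rw [Finset.card_insert_of_notMem hne, Finset.card_union_of_disjoint hdisj,
    Finset.card_image_of_injective _ Finset.singleton_injective,
    Finset.card_image_of_injective _ (pairF_inj k)]
  simp [Fintype.card_fin]

lemma myCoef_mEval (k : ℕ) (hk : 1 ≤ k) (x : Fin (2*k) → ℝ) :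
    mEval (myCoef k) x =
      (∑ i, x i) - (1 / (k : ℝ)) * (∑ j : Fin k, x ⟨2 * j, two_mul_fin_lt k j⟩ * x ⟨2 * j + 1, two_mul_add_one_fin_lt k j⟩)
        - (k : ℝ) := by
  classical
  rw [mEval]
  rw [← Finset.sum_filter_of_ne (s := Finset.univ)
    (p := fun S => myCoef k S ≠ 0) (by
      intro S _ h hc
      rw [hc] at h; simp at h)]
  have hfil : (Finset.univ.filter (fun S => myCoef k S ≠ 0)) =
      insert (∅ : Finset (Fin (2*k)))
        ((Finset.univ.image fun i => ({i} : Finset (Fin (2*k)))) ∪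
          Finset.univ.image (pairF k)) := by
    ext S
    simp only [Finset.mem_filter, Finset.mem_univ, true_and]
    exact myCoef_support k hk S
  rw [hfil]
  have hne : (∅ : Finset (Fin (2*k))) ∉
      ((Finset.univ.image fun i => ({i} : Finset (Fin (2*k)))) ∪
          Finset.univ.image (pairF k)) := by
    simp only [Finset.mem_union, Finset.mem_image, Finset.mem_univ, true_and, not_or]
    constructor
    · rintro ⟨i, hi⟩; exact Finset.singleton_ne_empty i hi
    · rintro ⟨j, hj⟩
      have := pairF_card k j; rw [hj] at this; simp at this
  have hdisj : Disjoint (Finset.univ.image fun i => ({i} : Finset (Fin (2*k))))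
      (Finset.univ.image (pairF k)) := by
    rw [Finset.disjoint_left]
    intro S hS hS'
    simp only [Finset.mem_image, Finset.mem_univ, true_and] at hS hS'
    obtain ⟨i, hi⟩ := hS; obtain ⟨j, hj⟩ := hS'
    have := pairF_card k j
    rw [hj, ← hi] at this; simp at this
  rw [Finset.sum_insert hne, Finset.sum_union hdisj,
    Finset.sum_image (fun a _ b _ h => Finset.singleton_injective h),
    Finset.sum_image (fun a _ b _ h => pairF_inj k h)]
  have h1 : ∀ i : Fin (2*k), myCoef k {i} * ∏ a ∈ ({i} : Finset (Fin (2*k))), x a = x i := by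
    intro i; rw [myCoef_singleton]; simp
  have h2 : ∀ j : Fin k, myCoef k (pairF k j) * ∏ a ∈ pairF k j, x a =
      -(1/(k:ℝ)) * (x ⟨2 * j, by omega⟩ * x ⟨2 * j + 1, by omega⟩) := by
    intro j
    rw [myCoef_pair, pairF, Finset.prod_pair (by simp [Fin.ext_iff])]
  rw [Finset.sum_congr rfl (fun i _ => h1 i), Finset.sum_congr rfl (fun j _ => h2 j),
    myCoef_empty]
  rw [← Finset.mul_sum]
  simp; ring

/-- The function `f_n` (with `n = 2k`) is represented as the sign of the polynomial
`p(x) = Σ_i x_i - (1/k) Σ_j x_{2j-1} x_{2j} - k`; in particular `f_n` is a quadratic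
threshold function whose representing polynomial has `n + k + 1` terms, i.e. `O(n)` terms.
(Variables are indexed `0, …, 2k-1`; the `j`-th block consists of indices `2j, 2j+1`.) -/
theorem f_n_is_small_qtf (k : ℕ) (hk : 1 ≤ k) (f : (Fin (2 * k) → Bool) → Bool)
    (hf : ∀ x, f x = true ↔
      (k + 1 ≤ wt x ∨ (k ≤ wt x ∧
        ∀ j : Fin k, ¬(x ⟨2 * j, by omega⟩ = true ∧ x ⟨2 * j + 1, by omega⟩ = true)))) :
    (∀ x : Fin (2 * k) → Bool,
      f x = true ↔
        0 ≤ (∑ i, bval (x i))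
            - (1 / (k : ℝ)) * (∑ j : Fin k, bval (x ⟨2 * j, by omega⟩) * bval (x ⟨2 * j + 1, by omega⟩))
            - (k : ℝ)) ∧
    ∃ coef : Finset (Fin (2 * k)) → ℝ,
      (∀ T, coef T ≠ 0 → T.card ≤ 2) ∧
      nTerms coef = 2 * k + k + 1 ∧
      (∀ x : Fin (2 * k) → Bool,
        mEval coef (fun i => bval (x i)) =
          (∑ i, bval (x i))
            - (1 / (k : ℝ)) * (∑ j : Fin k, bval (x ⟨2 * j, by omega⟩) * bval (x ⟨2 * j + 1, by omega⟩))
            - (k : ℝ)) := by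
  constructor
  · intro x
    rw [hf x]
    exact part1 k hk x
  · exact ⟨myCoef k, myCoef_card_le k, myCoef_nTerms k hk,
      fun x => myCoef_mEval k hk fun i => bval (x i)⟩
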